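/- Let k be a finite field with |k| > 9 and n ≥ 2. Let H be an additive subgroup of the matrix algebra gl_n(k) that is invariant under conjugation by SL_n(k). Then either H is contained in the scalar matrices, or H contains sl_n(k) (the trace-zero matrices). -/

import Mathlib

open Matrix Finset
set_option linter.unusedSectionVars false
set_option linter.unnecessarySeqFocus false
set_option maxHeartbeats 1000000

namespace Stmt6Aux

variable {n : ℕ} {k : Type*} [Field k] [Fintype k] [DecidableEq k]

abbrev Mat (n : ℕ) (k : Type*) [Field k] := Matrix (Fin n) (Fin n) k

variable {H : AddSubgroup (Mat n k)}

/-- conjugation closure restated for plain matrices -/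
lemma conj_mem
    (hinv : ∀ g : Matrix.SpecialLinearGroup (Fin n) k, ∀ x ∈ H,
      (g : Mat n k) * x * ((g⁻¹ : Matrix.SpecialLinearGroup (Fin n) k) : Mat n k) ∈ H)
    {a b x : Mat n k} (ha : a.det = 1) (hab : a * b = 1) (hx : x ∈ H) :
    a * x * b ∈ H := by
  have hb : b.det = 1 := by
    have h := congrArg Matrix.det hab
    rw [Matrix.det_mul, ha, one_mul, Matrix.det_one] at h
    exact h
  let g : Matrix.SpecialLinearGroup (Fin n) k := ⟨a, ha⟩
  let g' : Matrix.SpecialLinearGroup (Fin n) k := ⟨b, hb⟩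
  have hgg' : g * g' = 1 := Subtype.ext (by
    simp only [Matrix.SpecialLinearGroup.coe_mul]
    exact hab.trans (Matrix.SpecialLinearGroup.coe_one).symm)
  have hi : g⁻¹ = g' := inv_eq_of_mul_eq_one_right hgg'
  have := hinv g x hx
  rwa [hi] at this

/-- transvection conjugation: difference form -/
lemma transvect_mem
    (hinv : ∀ g : Matrix.SpecialLinearGroup (Fin n) k, ∀ x ∈ H,
      (g : Mat n k) * x * ((g⁻¹ : Matrix.SpecialLinearGroup (Fin n) k) : Mat n k) ∈ H)
    {i j : Fin n} (hij : i ≠ j) (c : k) {x : Mat n k} (hx : x ∈ H) :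
    single i j c * x - x * single i j c
      - single i j c * x * single i j c ∈ H := by
  set e := single i j c with he
  have hee : e * e = 0 := by
    rw [he]
    exact single_mul_single_of_ne c i j i hij.symm c
  have h1 : (1 + e) * x * (1 - e) ∈ H := by
    apply conj_mem hinv ?_ ?_ hx
    · have : (1 : Mat n k) + e = Matrix.transvection i j c := rfl
      rw [this]
      exact Matrix.det_transvection_of_ne i j hij c
    · have : (1 + e) * (1 - e) = 1 - e * e := by noncomm_ring
      rw [this, hee, sub_zero]
  have h2 : (1 + e) * x * (1 - e) - x
      = e * x - x * e - e * x * e := by noncomm_ring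
  have := AddSubgroup.sub_mem H h1 hx
  rwa [h2] at this


lemma zpow_sum_prod {ι : Type*} (t : kˣ) (s : Finset ι) (f : ι → ℤ) :
    t ^ (∑ p ∈ s, f p) = ∏ p ∈ s, t ^ f p := by
  classical
  induction s using Finset.induction_on with
  | empty => simp
  | insert _ _ h ih => rw [Finset.sum_insert h, Finset.prod_insert h, _root_.zpow_add, ih]

lemma sum_units_pow_nat (hk : 9 < Fintype.card k) {m : ℕ} (h0 : m ≠ 0) (hb : m ≤ 4) :
    ∑ t : kˣ, ((t : k)) ^ m = 0 := by
  have h := FiniteField.sum_pow_units k m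
  rw [if_neg] at h
  · exact h
  · intro hd
    have := Nat.le_of_dvd (Nat.pos_of_ne_zero h0) hd
    omega

lemma sum_units_zpow (hk : 9 < Fintype.card k) {a : ℤ} (ha : a ≠ 0) (hb : a.natAbs ≤ 4) :
    ∑ t : kˣ, ((t ^ a : kˣ) : k) = 0 := by
  rcases Int.natAbs_eq a with h | h
  · rw [h]
    have : ∀ t : kˣ, ((t ^ ((a.natAbs : ℤ)) : kˣ) : k) = ((t : k)) ^ a.natAbs := by
      intro t; rw [zpow_natCast, Units.val_pow_eq_pow_val]
    simp_rw [this]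
    exact sum_units_pow_nat hk (by omega) hb
  · rw [h]
    have key : ∀ t : kˣ, ((t ^ (-(a.natAbs : ℤ)) : kˣ) : k) = ((t⁻¹ : kˣ) : k) ^ a.natAbs := by
      intro t
      rw [_root_.zpow_neg, zpow_natCast, ← inv_pow, Units.val_pow_eq_pow_val]
    simp_rw [key]
    rw [Fintype.sum_equiv (Equiv.inv kˣ) _ (fun t => ((t : k)) ^ a.natAbs) (fun t => by simp)]
    exact sum_units_pow_nat hk (by omega) hb


lemma mask_mem
    (hinv : ∀ g : Matrix.SpecialLinearGroup (Fin n) k, ∀ x ∈ H,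
      (g : Mat n k) * x * ((g⁻¹ : Matrix.SpecialLinearGroup (Fin n) k) : Mat n k) ∈ H)
    (hk : 9 < Fintype.card k)
    (w : Fin n → ℤ) (hw0 : ∑ p, w p = 0) (hwb : ∀ p, (w p).natAbs ≤ 2)
    {x : Mat n k} (hx : x ∈ H) :
    Matrix.of (fun p q => if w p = w q then x p q else 0) ∈ H := by
  set d : kˣ → Mat n k := fun t => Matrix.diagonal (fun p => ((t ^ w p : kˣ) : k)) with hd
  set d' : kˣ → Mat n k := fun t => Matrix.diagonal (fun p => (((t ^ w p : kˣ))⁻¹ : k)) with hd'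
  have hdet : ∀ t, (d t).det = 1 := by
    intro t
    rw [hd]
    simp only [Matrix.det_diagonal]
    have : ∀ p : Fin n, ((t ^ w p : kˣ) : k) = (Units.coeHom k) (t ^ w p) := fun p => rfl
    simp_rw [this]
    rw [← map_prod (Units.coeHom k), ← zpow_sum_prod, hw0, zpow_zero, _root_.map_one]
  have hmul : ∀ t, d t * d' t = 1 := by
    intro t
    rw [hd, hd', Matrix.diagonal_mul_diagonal]
    have : (fun i => ((t ^ w i : kˣ) : k) * (((t ^ w i : kˣ)) : k)⁻¹) = fun _ : Fin n => (1:k) :=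
      funext fun i => mul_inv_cancel₀ (Units.ne_zero _)
    rw [this, Matrix.diagonal_one]
  have hS : ∑ t : kˣ, d t * x * d' t ∈ H :=
    AddSubgroup.sum_mem H (fun t _ => conj_mem hinv (hdet t) (hmul t) hx)
  have key : ∑ t : kˣ, d t * x * d' t
      = - Matrix.of (fun p q => if w p = w q then x p q else 0) := by
    ext p q
    rw [Matrix.sum_apply]
    have hterm : ∀ t : kˣ, (d t * x * d' t) p q
        = ((t ^ (w p - w q) : kˣ) : k) * x p q := by
      intro t
      rw [hd, hd']
      rw [Matrix.mul_diagonal, Matrix.diagonal_mul]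
      have : ((t ^ (w p - w q) : kˣ) : k) = ((t ^ w p : kˣ) : k) * (((t ^ w q : kˣ)) : k)⁻¹ := by
        rw [_root_.zpow_sub, Units.val_mul, Units.val_inv_eq_inv_val]
      rw [this]
      ring
    simp_rw [hterm]
    rw [← Finset.sum_mul]
    rw [Matrix.neg_apply, Matrix.of_apply]
    by_cases hpq : w p = w q
    · rw [if_pos hpq, hpq, sub_self]
      have h1 : ∀ t : kˣ, ((t ^ (0:ℤ) : kˣ) : k) = 1 := by intro t; rw [zpow_zero]; rfl
      simp_rw [h1]
      rw [Finset.sum_const, Finset.card_univ, nsmul_eq_mul, mul_one]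
      have hcard : (Fintype.card kˣ : k) = -1 := by
        rw [Fintype.card_units, Nat.cast_sub (Nat.one_le_iff_ne_zero.mpr Fintype.card_ne_zero), FiniteField.cast_card_eq_zero,
          Nat.cast_one, zero_sub]
      rw [hcard]
      ring
    · rw [if_neg hpq, sum_units_zpow hk (sub_ne_zero.mpr hpq) ?_, zero_mul, neg_zero]
      have h1 := hwb p
      have h2 := hwb q
      omega
  have := AddSubgroup.neg_mem H hS
  rw [key, neg_neg] at this
  exact this


lemma lineA
    (hinv : ∀ g : Matrix.SpecialLinearGroup (Fin n) k, ∀ x ∈ H,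
      (g : Mat n k) * x * ((g⁻¹ : Matrix.SpecialLinearGroup (Fin n) k) : Mat n k) ∈ H)
    (hk : 9 < Fintype.card k)
    {i j : Fin n} (hij : i ≠ j) {x : Mat n k} (hx : x ∈ H)
    (hrow : ∀ q, q ≠ i → q ≠ j → x j q = 0) (hcol : ∀ p, p ≠ i → p ≠ j → x p i = 0)
    (hnz : x j i ≠ 0 ∨ x i i ≠ x j j) :
    ∃ b : k, b ≠ 0 ∧ single i j b ∈ H := by
  obtain ⟨c, hβ⟩ : ∃ c : k, c * (x j j - x i i) - c ^ 2 * x j i ≠ 0 := by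
    by_cases hji : x j i = 0
    · have hd : x i i ≠ x j j := hnz.resolve_left (by simp [hji])
      exact ⟨1, by simp [hji, sub_ne_zero.mpr (Ne.symm hd)]⟩
    · set γ := x j j - x i i with hγ
      have hcard : ({0, γ * (x j i)⁻¹} : Finset k).card < Fintype.card k := by
        have h2 : ({0, γ * (x j i)⁻¹} : Finset k).card ≤ 2 := by
          apply le_trans (Finset.card_insert_le _ _); simp
        omega
      have hne : (({0, γ * (x j i)⁻¹} : Finset k)ᶜ).Nonempty := by
        rw [← Finset.card_pos, Finset.card_compl]
        omega
      obtain ⟨c, hc⟩ := hne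
      rw [Finset.mem_compl, Finset.mem_insert, Finset.mem_singleton] at hc
      push_neg at hc
      refine ⟨c, ?_⟩
      have h1 : γ - c * x j i ≠ 0 := by
        intro h
        apply hc.2
        field_simp
        linear_combination -h
      have : c * γ - c ^ 2 * x j i = c * (γ - c * x j i) := by ring
      rw [this]
      exact mul_ne_zero hc.1 h1
  set β := c * (x j j - x i i) - c ^ 2 * x j i with hβdef
  set e := single i j c with he
  set y := e * x - x * e - e * x * e with hy
  have hyH : y ∈ H := transvect_mem hinv hij c hx
  set w : Fin n → ℤ := fun p => if p = i then 1 else if p = j then -1 else 0 with hw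
  have hw0 : ∑ p, w p = 0 := by
    have : w = fun p => (if p = i then (1:ℤ) else 0) + (if p = j then (-1:ℤ) else 0) := by
      funext p
      rw [hw]
      by_cases h1 : p = i
      · subst h1; simp [hij]
      · by_cases h2 : p = j
        · subst h2; simp [Ne.symm hij]
        · simp [h1, h2]
    rw [this]
    rw [Finset.sum_add_distrib]
    simp [Finset.sum_ite_eq']
  have hwb : ∀ p, (w p).natAbs ≤ 2 := by
    intro p; rw [hw]; dsimp only; split_ifs <;> simp
  have hmask : Matrix.of (fun p q => if w p = w q then y p q else 0) ∈ H :=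
    mask_mem hinv hk w hw0 hwb hyH
  have hz : y - Matrix.of (fun p q => if w p = w q then y p q else 0)
      = single i j β := by
    ext p q
    rw [Matrix.sub_apply, Matrix.of_apply]
    have hwi : w i = 1 := by rw [hw]; simp
    have hwj : w j = -1 := by rw [hw]; simp [hij.symm]
    by_cases hpq : w p = w q
    · rw [if_pos hpq, sub_self]
      symm
      apply single_apply_of_ne
      rintro ⟨rfl, rfl⟩
      rw [hwi, hwj] at hpq
      norm_num at hpq
    · rw [if_neg hpq, sub_zero, hy, he]
      by_cases hp : p = i
      · rw [hp]
        by_cases hq : q = j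
        · rw [hq]
          simp only [Matrix.sub_apply]
          rw [single_mul_apply_same, mul_single_apply_same,
            mul_single_apply_same, single_mul_apply_same,
            single_apply_same, hβdef]
          ring
        · have hqi : q ≠ i := fun h => hpq (by rw [hp, h])
          have hq0 : x j q = 0 := hrow q hqi hq
          simp only [Matrix.sub_apply]
          rw [single_mul_apply_same,
            mul_single_apply_of_ne _ _ _ _ _ hq,
            mul_single_apply_of_ne _ _ _ _ _ hq,
            single_apply_of_ne i j β i q (by tauto), hq0]
          ring
      · by_cases hq : q = j
        · rw [hq]
          have hpj : p ≠ j := fun h => hpq (by rw [hq, h])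
          have hp0 : x p i = 0 := hcol p hp hpj
          simp only [Matrix.sub_apply]
          rw [single_mul_apply_of_ne _ _ _ _ _ hp,
            mul_single_apply_same,
            mul_single_apply_same,
            single_mul_apply_of_ne _ _ _ _ _ hp,
            single_apply_of_ne i j β p j (by tauto), hp0]
          ring
        · simp only [Matrix.sub_apply]
          rw [single_mul_apply_of_ne _ _ _ _ _ hp,
            mul_single_apply_of_ne _ _ _ _ _ hq,
            mul_single_apply_of_ne _ _ _ _ _ hq,
            single_apply_of_ne i j β p q (by tauto)]
          ring
  refine ⟨β, hβ, ?_⟩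
  rw [← hz]
  exact AddSubgroup.sub_mem H hyH hmask


lemma prod_ite_two {i j : Fin n} (hij : i ≠ j) (a b : k) :
    ∏ p : Fin n, (if p = i then a else if p = j then b else 1) = a * b := by
  rw [← Finset.mul_prod_erase Finset.univ _ (Finset.mem_univ i),
    ← Finset.mul_prod_erase _ _ (Finset.mem_erase.mpr ⟨hij.symm, Finset.mem_univ j⟩)]
  rw [if_pos rfl, if_neg hij.symm, if_pos rfl]
  rw [Finset.prod_eq_one, mul_one]
  intro p hp
  rw [Finset.mem_erase, Finset.mem_erase] at hp
  rw [if_neg hp.2.1, if_neg hp.1]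

lemma stdE_sub (i j : Fin n) (u v : k) :
    single i j (u - v) = single i j u - single i j v := by
  ext p q
  simp only [Matrix.single, Matrix.sub_apply, Matrix.of_apply]
  split_ifs <;> simp

lemma sq_smul_line
    (hinv : ∀ g : Matrix.SpecialLinearGroup (Fin n) k, ∀ x ∈ H,
      (g : Mat n k) * x * ((g⁻¹ : Matrix.SpecialLinearGroup (Fin n) k) : Mat n k) ∈ H)
    {i j : Fin n} (hij : i ≠ j) (a c : k) (h : single i j c ∈ H) :
    single i j (a ^ 2 * c) ∈ H := by
  rcases eq_or_ne a 0 with rfl | ha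
  · have : (0:k) ^ 2 * c = 0 := by ring
    rw [this]
    have h0 : single i j (0:k) = 0 := single_zero i j
    rw [h0]
    exact AddSubgroup.zero_mem H
  · set v : Fin n → k := fun p => if p = i then a else if p = j then a⁻¹ else 1 with hv
    set v' : Fin n → k := fun p => if p = i then a⁻¹ else if p = j then a else 1 with hv'
    have hdet : (Matrix.diagonal v).det = 1 := by
      rw [Matrix.det_diagonal, hv, prod_ite_two hij, mul_inv_cancel₀ ha]
    have hmul : Matrix.diagonal v * Matrix.diagonal v' = 1 := by
      rw [Matrix.diagonal_mul_diagonal]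
      have : (fun p => v p * v' p) = fun _ : Fin n => (1:k) := by
        funext p
        rw [hv, hv']
        dsimp only
        split_ifs <;> field_simp
      rw [this, Matrix.diagonal_one]
    have hconj := conj_mem hinv hdet hmul h
    have heq : Matrix.diagonal v * single i j c * Matrix.diagonal v'
        = single i j (a ^ 2 * c) := by
      ext p q
      rw [Matrix.mul_diagonal, Matrix.diagonal_mul]
      by_cases hp : p = i
      · by_cases hq : q = j
        · rw [hp, hq, single_apply_same, single_apply_same, hv, hv']
          dsimp only
          rw [if_pos rfl, if_neg hij.symm, if_pos rfl]
          ring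
        · rw [single_apply_of_ne i j c p q (by tauto),
            single_apply_of_ne i j (a^2*c) p q (by tauto)]
          ring
      · rw [single_apply_of_ne i j c p q (by tauto),
          single_apply_of_ne i j (a^2*c) p q (by tauto)]
        ring
    rwa [heq] at hconj

lemma exists_sq_sub_sq (s : k) : ∃ a b : k, s = a ^ 2 - b ^ 2 := by
  by_cases h2 : ringChar k = 2
  · obtain ⟨r, hr⟩ := FiniteField.isSquare_of_char_two h2 s
    exact ⟨r, 0, by rw [hr]; ring⟩
  · have h2' : (2 : k) ≠ 0 := by
      intro h
      have hd : ringChar k ∣ 2 := (CharP.cast_eq_zero_iff k (ringChar k) 2).mp (by exact_mod_cast h)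
      have hp : (ringChar k).Prime := CharP.char_is_prime k (ringChar k)
      have := (Nat.prime_dvd_prime_iff_eq hp Nat.prime_two).mp hd
      exact h2 this
    refine ⟨(s + 1) / 2, (s - 1) / 2, ?_⟩
    field_simp
    ring

lemma line_full
    (hinv : ∀ g : Matrix.SpecialLinearGroup (Fin n) k, ∀ x ∈ H,
      (g : Mat n k) * x * ((g⁻¹ : Matrix.SpecialLinearGroup (Fin n) k) : Mat n k) ∈ H)
    {i j : Fin n} (hij : i ≠ j) {b : k} (hb : b ≠ 0) (hmem : single i j b ∈ H) :
    ∀ c : k, single i j c ∈ H := by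
  intro c
  have key : ∀ s : k, single i j (s * b) ∈ H := by
    intro s
    obtain ⟨α, δ, hs⟩ := exists_sq_sub_sq (k := k) s
    have h1 := sq_smul_line hinv hij α b hmem
    have h2 := sq_smul_line hinv hij δ b hmem
    have h3 := AddSubgroup.sub_mem H h1 h2
    rw [← stdE_sub] at h3
    have : s * b = α ^ 2 * b - δ ^ 2 * b := by rw [hs]; ring
    rwa [← this] at h3
  have hc : c = (c * b⁻¹) * b := by field_simp
  rw [hc]
  exact key _


variable (hinv : ∀ g : Matrix.SpecialLinearGroup (Fin n) k, ∀ x ∈ H,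
      (g : Mat n k) * x * ((g⁻¹ : Matrix.SpecialLinearGroup (Fin n) k) : Mat n k) ∈ H)

include hinv

lemma transfer_snd {i j r : Fin n} (hjr : j ≠ r) (hri : r ≠ i)
    (hline : ∀ c : k, single i j c ∈ H) :
    ∀ c : k, single i r c ∈ H := by
  intro c
  have h := transvect_mem hinv hjr (1:k) (hline c)
  rw [single_mul_single_of_ne 1 j r i hri c, zero_mul, single_mul_single_same,
    zero_sub, sub_zero, mul_one] at h
  have h2 := AddSubgroup.neg_mem H h
  rwa [neg_neg] at h2

lemma transfer_fst {i j r : Fin n} (hri : r ≠ i) (hrj : r ≠ j)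
    (hline : ∀ c : k, single i j c ∈ H) :
    ∀ c : k, single r j c ∈ H := by
  intro c
  have h := transvect_mem hinv hri (1:k) (hline c)
  rw [single_mul_single_same, single_mul_single_of_ne c i j r hrj.symm 1,
    single_mul_single_of_ne (1*c) r j r hrj.symm 1, sub_zero, sub_zero, one_mul] at h
  exact h

lemma transfer_swap (hk : 9 < Fintype.card k) {p q : Fin n} (hpq : p ≠ q)
    (hline : ∀ c : k, single p q c ∈ H) :
    ∀ c : k, single q p c ∈ H := by
  obtain ⟨t, ht0, ht1⟩ : ∃ t : k, t ≠ 0 ∧ t ≠ 1 := by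
    have hcard : ({0, 1} : Finset k).card < Fintype.card k := by
      have : ({0, 1} : Finset k).card ≤ 2 := by
        apply le_trans (Finset.card_insert_le _ _); simp
      omega
    have hne : ((({0, 1} : Finset k))ᶜ).Nonempty := by
      rw [← Finset.card_pos, Finset.card_compl]; omega
    obtain ⟨t, ht⟩ := hne
    rw [Finset.mem_compl, Finset.mem_insert, Finset.mem_singleton] at ht
    push_neg at ht
    exact ⟨t, ht.1, ht.2⟩
  have T : ∀ d c : k, single q q (d * c) - single p p (c * d)
      - single q p (d * c * d) ∈ H := by
    intro d c
    have h := transvect_mem hinv hpq.symm d (hline c)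
    rw [single_mul_single_same, single_mul_single_same, single_mul_single_same] at h
    exact h
  have hsum := AddSubgroup.add_mem H (T 1 (-t)) (T t 1)
  have hform : (single q q (1 * (-t)) - single p p ((-t) * 1)
      - single q p (1 * (-t) * 1))
      + (single q q (t * 1) - single p p (1 * t)
      - single q p (t * 1 * t)) = single q p (t - t * t) := by
    ext a b
    simp only [Matrix.single, Matrix.of_apply, Matrix.add_apply, Matrix.sub_apply]
    split_ifs <;> simp_all <;> ring
  rw [hform] at hsum
  have htt : t - t * t ≠ 0 := by
    have : t - t * t = t * (1 - t) := by ring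
    rw [this]
    exact mul_ne_zero ht0 (sub_ne_zero.mpr (Ne.symm ht1))
  exact line_full hinv hpq.symm htt hsum

lemma lines_all (hk : 9 < Fintype.card k) {i j : Fin n} (hij : i ≠ j)
    (hline : ∀ c : k, single i j c ∈ H) :
    ∀ p q : Fin n, p ≠ q → ∀ c : k, single p q c ∈ H := by
  intro p q hpq
  have hswap : ∀ c : k, single j i c ∈ H := transfer_swap hinv hk hij hline
  by_cases hqi : q = i
  · subst hqi
    by_cases hpj : p = j
    · subst hpj; exact hswap
    · exact transfer_fst hinv hpj hpq hswap
  · have hiq : ∀ c : k, single i q c ∈ H := by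
      by_cases hqj : q = j
      · subst hqj; exact hline
      · exact transfer_snd hinv (Ne.symm hqj) hqi hline
    by_cases hpi : p = i
    · subst hpi; exact hiq
    · exact transfer_fst hinv hpi hpq hiq

lemma line_diag (hall : ∀ p q : Fin n, p ≠ q → ∀ c : k, single p q c ∈ H)
    {i j : Fin n} (hij : i ≠ j) (c : k) :
    single i i c - single j j c ∈ H := by
  have h := transvect_mem hinv hij (1:k) (hall j i hij.symm c)
  rw [single_mul_single_same, single_mul_single_same, single_mul_single_same] at h
  have h2 := AddSubgroup.add_mem H h (hall i j hij (1 * c * 1))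
  rw [sub_add_cancel, one_mul, mul_one] at h2
  exact h2

omit hinv

lemma dense (hn : 0 < n)
    (hall : ∀ p q : Fin n, p ≠ q → ∀ c : k, single p q c ∈ H)
    (hdiag : ∀ p q : Fin n, p ≠ q → ∀ c : k, single p p c - single q q c ∈ H)
    (x : Mat n k) (htr : Matrix.trace x = 0) : x ∈ H := by
  set i0 : Fin n := ⟨0, hn⟩ with hi0
  have hdecomp : x = ∑ p : Fin n, ∑ q : Fin n,
      (if p = q then single p p (x p p) - single i0 i0 (x p p)
        else single p q (x p q)) := by
    have h1 : ∀ p : Fin n, (∑ q, (if p = q then single p p (x p p)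
          - single i0 i0 (x p p) else single p q (x p q)))
        = (∑ q, single p q (x p q)) - single i0 i0 (x p p) := by
      intro p
      have hterm : ∀ q : Fin n, (if p = q then single p p (x p p)
            - single i0 i0 (x p p) else single p q (x p q))
          = single p q (x p q)
            - (if p = q then single i0 i0 (x p p) else 0) := by
        intro q
        by_cases h : p = q
        · subst h; rw [if_pos rfl, if_pos rfl]
        · rw [if_neg h, if_neg h, sub_zero]
      rw [Finset.sum_congr rfl (fun q _ => hterm q), Finset.sum_sub_distrib,
        Finset.sum_ite_eq, if_pos (Finset.mem_univ p)]
    rw [Finset.sum_congr rfl (fun p _ => h1 p), Finset.sum_sub_distrib]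
    have h2 : (∑ p : Fin n, single i0 i0 (x p p))
        = single i0 i0 (Matrix.trace x) := by
      ext a b
      rw [Matrix.sum_apply]
      simp only [Matrix.single, Matrix.of_apply]
      split_ifs with h
      · rw [Matrix.trace]; simp [Matrix.diag]
      · simp
    rw [h2, htr, single_zero, sub_zero, ← Matrix.matrix_eq_sum_single]
  rw [hdecomp]
  apply AddSubgroup.sum_mem
  intro p _
  apply AddSubgroup.sum_mem
  intro q _
  by_cases h : p = q
  · rw [if_pos h]
    rcases eq_or_ne p i0 with rfl | hp
    · rw [sub_self]; exact AddSubgroup.zero_mem H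
    · exact hdiag p i0 hp _
  · rw [if_neg h]
    exact hall p q h _


end Stmt6Aux

/-- Let `k` be a finite field with `|k| > 9` and `n ≥ 2`.  Any additive subgroup of
`gl_n(k)` invariant under conjugation by `SL_n(k)` is contained in the scalar matrices or
contains all trace-zero matrices. -/
theorem stmt6 {n : ℕ} (hn : 2 ≤ n) (k : Type*) [Field k] [Fintype k]
    (hk : 9 < Fintype.card k)
    (H : AddSubgroup (Matrix (Fin n) (Fin n) k))
    (hinv : ∀ g : Matrix.SpecialLinearGroup (Fin n) k, ∀ x ∈ H,
      (g : Matrix (Fin n) (Fin n) k) * x * ((g⁻¹ : Matrix.SpecialLinearGroup (Fin n) k) :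
        Matrix (Fin n) (Fin n) k) ∈ H) :
    (∀ x ∈ H, ∃ c : k, x = c • (1 : Matrix (Fin n) (Fin n) k)) ∨
    (∀ x : Matrix (Fin n) (Fin n) k, Matrix.trace x = 0 → x ∈ H) := by
  classical
  open Stmt6Aux in
  by_cases hsc : ∀ x ∈ H, ∃ c : k, x = c • (1 : Matrix (Fin n) (Fin n) k)
  · exact Or.inl hsc
  · right
    push_neg at hsc
    obtain ⟨x, hx, hxn⟩ := hsc
    have hn0 : 0 < n := by omega
    set i0 : Fin n := ⟨0, hn0⟩ with hi0
    -- find a witness pair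
    have hpair : ∃ i j : Fin n, i ≠ j ∧ (x j i ≠ 0 ∨ x i i ≠ x j j) := by
      by_contra hcon
      push_neg at hcon
      apply hxn (x i0 i0)
      ext p q
      rw [Matrix.smul_apply, Matrix.one_apply]
      by_cases hpq : p = q
      · subst hpq
        rw [if_pos rfl, smul_eq_mul, mul_one]
        rcases eq_or_ne p i0 with rfl | hp
        · rfl
        · exact ((hcon p i0 hp).2)
      · rw [if_neg hpq, smul_eq_mul, mul_zero]
        exact (hcon q p (Ne.symm hpq)).1
    obtain ⟨i, j, hij, hnz⟩ := hpair
    -- produce a cleaned element and extract a nonzero off-diagonal line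
    have hlineb : ∃ b : k, b ≠ 0 ∧ single i j b ∈ H := by
      by_cases hm : ∃ m : Fin n, m ≠ i ∧ m ≠ j
      · obtain ⟨m, hmi, hmj⟩ := hm
        set w : Fin n → ℤ := fun p =>
          if p = i then 1 else if p = j then 1 else if p = m then -2 else 0 with hw
        have hwi : w i = 1 := by rw [hw]; simp
        have hwj : w j = 1 := by rw [hw]; simp [hij.symm]
        have hw0 : ∑ p, w p = 0 := by
          have hsplit : w = fun p => (if p = i then (1:ℤ) else 0)
              + (if p = j then (1:ℤ) else 0) + (if p = m then (-2:ℤ) else 0) := by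
            funext p
            rw [hw]
            by_cases h1 : p = i
            · subst h1
              simp [hij, hmi.symm]
            · by_cases h2 : p = j
              · subst h2
                simp [h1, hmj.symm]
              · by_cases h3 : p = m
                · subst h3; simp [hmi, hmj]
                · simp [h1, h2, h3]
          rw [hsplit, Finset.sum_add_distrib, Finset.sum_add_distrib]
          simp [Finset.sum_ite_eq']
        have hwb : ∀ p, (w p).natAbs ≤ 2 := by
          intro p; rw [hw]; dsimp only; split_ifs <;> simp
        have hx' := mask_mem hinv hk w hw0 hwb hx
        set x' : Matrix (Fin n) (Fin n) k :=
          Matrix.of (fun p q => if w p = w q then x p q else 0) with hx'def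
        have hrow : ∀ q, q ≠ i → q ≠ j → x' j q = 0 := by
          intro q hqi hqj
          rw [hx'def]
          have : w q ≠ 1 := by
            rw [hw]; dsimp only
            rw [if_neg hqi, if_neg hqj]
            split_ifs <;> norm_num
          show (if w j = w q then x j q else 0) = 0
          rw [if_neg (by rw [hwj]; exact fun h => this h.symm)]
        have hcol : ∀ p, p ≠ i → p ≠ j → x' p i = 0 := by
          intro p hpi hpj
          rw [hx'def]
          have : w p ≠ 1 := by
            rw [hw]; dsimp only
            rw [if_neg hpi, if_neg hpj]
            split_ifs <;> norm_num
          show (if w p = w i then x p i else 0) = 0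
          rw [if_neg (by rw [hwi]; exact this)]
        have hji' : x' j i = x j i := by
          rw [hx'def]
          show (if w j = w i then x j i else 0) = x j i
          rw [if_pos (by rw [hwi, hwj])]
        have hii' : x' i i = x i i := by
          rw [hx'def]
          show (if w i = w i then x i i else 0) = x i i
          rw [if_pos rfl]
        have hjj' : x' j j = x j j := by
          rw [hx'def]
          show (if w j = w j then x j j else 0) = x j j
          rw [if_pos rfl]
        apply lineA hinv hk hij hx'
        · exact hrow
        · exact hcol
        · rw [hji', hii', hjj']
          exact hnz
      · push_neg at hm
        apply lineA hinv hk hij hx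
        · intro q hqi hqj
          exact absurd (hm q hqi) hqj
        · intro p hpi hpj
          exact absurd (hm p hpi) hpj
        · exact hnz
    obtain ⟨b, hb, hbH⟩ := hlineb
    have hline : ∀ c : k, single i j c ∈ H := line_full hinv hij hb hbH
    have hall : ∀ p q : Fin n, p ≠ q → ∀ c : k, single p q c ∈ H :=
      lines_all hinv hk hij hline
    have hdiag : ∀ p q : Fin n, p ≠ q → ∀ c : k,
        single p p c - single q q c ∈ H :=
      fun p q hpq c => line_diag hinv hall hpq c
    exact dense hn0 hall hdiag
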